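/- arXiv:1403.0388 — 5 statements merged into one kernel-verified Lean document; each statement's English description precedes it below -/
import Mathlib

section
/- Let β ∈ (0,1) be a real number, let n ≥ 1 be a natural number, let t be a natural number, and let F : Fin t → ℝ satisfy 0 ≤ F i ≤ 1 for all i. Let m be a natural number. If n * ∏_{i} (1 - (1-β) * F i) ≥ β^m, then ∑_{i} F i ≤ (m * ln(1/β) + ln n) / (1 - β). -/
theorem rwm_mistake_bound_core
    (β : ℝ) (hβ0 : 0 < β) (hβ1 : β < 1)
    (n : ℕ) (hn : 1 ≤ n)
    (t : ℕ) (F : Fin t → ℝ) (hF : ∀ i, 0 ≤ F i ∧ F i ≤ 1)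
    (m : ℕ)
    (h : (n : ℝ) * ∏ i, (1 - (1 - β) * F i) ≥ β ^ m) :
    ∑ i, F i ≤ ((m : ℝ) * Real.log (1 / β) + Real.log n) / (1 - β) := by
  have hnpos : (0:ℝ) < n := by exact_mod_cast hn
  have hprod_le : ∏ i, (1 - (1 - β) * F i) ≤ Real.exp (∑ i, -((1 - β) * F i)) := by
    rw [Real.exp_sum]
    apply Finset.prod_le_prod
    · intro i _
      nlinarith [(hF i).1, (hF i).2]
    · intro i _
      have := Real.add_one_le_exp (-((1 - β) * F i))
      linarith
  have h2 : β ^ m ≤ (n : ℝ) * Real.exp (∑ i, -((1 - β) * F i)) := by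
    calc β ^ m ≤ (n : ℝ) * ∏ i, (1 - (1 - β) * F i) := h
    _ ≤ _ := by
        apply mul_le_mul_of_nonneg_left hprod_le (le_of_lt hnpos)
  have hlog := Real.log_le_log (pow_pos hβ0 m) h2
  rw [Real.log_pow, Real.log_mul (ne_of_gt hnpos) (Real.exp_ne_zero _),
    Real.log_exp] at hlog
  have hsum : ∑ i, -((1 - β) * F i) = -((1 - β) * ∑ i, F i) := by
    simp [Finset.mul_sum]
  rw [hsum] at hlog
  have hlogβ : Real.log (1 / β) = -Real.log β := by
    rw [one_div, Real.log_inv]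
  rw [hlogβ, le_div_iff₀ (by linarith : (0:ℝ) < 1 - β)]
  nlinarith [hlog]
end

section
/- Let β ∈ (0,1) be a real number, n ≥ 1 and N natural numbers, x : Fin n → Fin N → Bool the experts' predictions, and c : Fin N → Bool the correct labels. For an expert i and a time t ≤ N, let mist i t denote the number of trials j < t with x i j ≠ c j, let w i t = β^(mist i t), and let W t = ∑_{i} w i t. For each trial t, let F t = (∑_{i : x i t ≠ c t} w i t) / W t be the fraction of the total weight placed on the wrong answer at trial t. Then for every t < N, W (t+1) = W t * (1 - (1-β) * F t). -/
/-- Number of mistakes expert `i` made during the first `t` trials. -/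
def mist {n N : ℕ} (x : Fin n → Fin N → Bool) (c : Fin N → Bool)
    (i : Fin n) (t : ℕ) : ℕ :=
  (Finset.univ.filter (fun j : Fin N => (j : ℕ) < t ∧ x i j ≠ c j)).card

/-- Weight of expert `i` just before trial `t`. -/
noncomputable def w (β : ℝ) {n N : ℕ} (x : Fin n → Fin N → Bool) (c : Fin N → Bool)
    (i : Fin n) (t : ℕ) : ℝ :=
  β ^ (mist x c i t)

/-- Total weight just before trial `t`. -/
noncomputable def W (β : ℝ) {n N : ℕ} (x : Fin n → Fin N → Bool) (c : Fin N → Bool)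
    (t : ℕ) : ℝ :=
  ∑ i : Fin n, w β x c i t

/-- Fraction of the total weight placed on the wrong answer at trial `t`. -/
noncomputable def F (β : ℝ) {n N : ℕ} (x : Fin n → Fin N → Bool) (c : Fin N → Bool)
    (t : Fin N) : ℝ :=
  (∑ i ∈ Finset.univ.filter (fun i : Fin n => x i t ≠ c t), w β x c i (t : ℕ)) /
    W β x c (t : ℕ)

lemma mist_succ {n N : ℕ} (x : Fin n → Fin N → Bool) (c : Fin N → Bool)
    (i : Fin n) (t : Fin N) :
    mist x c i ((t : ℕ) + 1) =
      mist x c i (t : ℕ) + (if x i t ≠ c t then 1 else 0) := by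
  unfold mist
  by_cases h : x i t ≠ c t
  · rw [if_pos h]
    have : (Finset.univ.filter (fun j : Fin N => (j : ℕ) < (t : ℕ) + 1 ∧ x i j ≠ c j))
        = insert t (Finset.univ.filter (fun j : Fin N => (j : ℕ) < (t : ℕ) ∧ x i j ≠ c j)) := by
      ext j
      simp only [Finset.mem_insert, Finset.mem_filter, Finset.mem_univ, true_and]
      constructor
      · rintro ⟨hj, hx⟩
        rcases Nat.lt_succ_iff_lt_or_eq.mp hj with h' | h'
        · exact Or.inr ⟨h', hx⟩
        · exact Or.inl (Fin.ext h')
      · rintro (rfl | ⟨hj, hx⟩)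
        · exact ⟨Nat.lt_succ_self _, h⟩
        · exact ⟨Nat.lt_succ_of_lt hj, hx⟩
    rw [this, Finset.card_insert_of_notMem (by simp)]
  · rw [if_neg h]
    simp only [add_zero]
    congr 1
    ext j
    simp only [Finset.mem_filter, Finset.mem_univ, true_and]
    constructor
    · rintro ⟨hj, hx⟩
      rcases Nat.lt_succ_iff_lt_or_eq.mp hj with h' | h'
      · exact ⟨h', hx⟩
      · exact absurd (Fin.ext h' ▸ hx) h
    · rintro ⟨hj, hx⟩
      exact ⟨Nat.lt_succ_of_lt hj, hx⟩

theorem rwm_weight_recurrence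
    (β : ℝ) (hβ0 : 0 < β) (hβ1 : β < 1)
    (n N : ℕ) (hn : 1 ≤ n)
    (x : Fin n → Fin N → Bool) (c : Fin N → Bool)
    (t : Fin N) :
    W β x c ((t : ℕ) + 1) = W β x c (t : ℕ) * (1 - (1 - β) * F β x c t) := by
  have hWpos : 0 < W β x c (t : ℕ) := by
    apply Finset.sum_pos
    · intro i _
      exact pow_pos hβ0 _
    · exact Finset.univ_nonempty_iff.mpr (Fin.pos_iff_nonempty.mp hn)
  set S := ∑ i ∈ Finset.univ.filter (fun i : Fin n => x i t ≠ c t), w β x c i (t : ℕ) with hS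
  have hw : ∀ i, w β x c i ((t : ℕ) + 1)
      = (if x i t ≠ c t then β * w β x c i (t : ℕ) else w β x c i (t : ℕ)) := by
    intro i
    unfold w
    rw [mist_succ]
    by_cases h : x i t ≠ c t
    · simp [h, pow_succ, mul_comm]
    · simp [h]
  have key : W β x c ((t : ℕ) + 1) = W β x c (t : ℕ) - (1 - β) * S := by
    unfold W
    calc ∑ i : Fin n, w β x c i ((t : ℕ) + 1)
        = ∑ i : Fin n, (w β x c i (t : ℕ)
            - (if x i t ≠ c t then (1 - β) * w β x c i (t : ℕ) else 0)) := by
          apply Finset.sum_congr rfl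
          intro i _
          rw [hw i]
          by_cases h : x i t ≠ c t <;> simp [h] <;> ring
      _ = ∑ i : Fin n, w β x c i (t : ℕ)
            - ∑ i : Fin n, (if x i t ≠ c t then (1 - β) * w β x c i (t : ℕ) else 0) := by
          rw [Finset.sum_sub_distrib]
      _ = ∑ i : Fin n, w β x c i (t : ℕ) - (1 - β) * S := by
          rw [hS, Finset.mul_sum, Finset.sum_filter]
  rw [key]
  unfold F
  rw [← hS]
  field_simp
end

section
/- Let β ∈ (0,1) be a real number, n ≥ 1 a natural number, and for each j ∈ {1,2,3} let t_j be a natural number and F_j : Fin t_j → ℝ satisfy 0 ≤ F_j i ≤ 1 for all i. Let m_1, m_2, m_3 be natural numbers such that for each j, n * ∏_{i} (1 - (1-β) * F_j i) ≥ β^(m_j). Then ∑_{j=1}^{3} ∑_{i} F_j i ≤ ((m_1 + m_2 + m_3) * ln(1/β) + 3 * ln n) / (1 - β). -/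
lemma crwm_single_bound
    (β : ℝ) (hβ0 : 0 < β) (hβ1 : β < 1)
    (n : ℕ) (hn : 1 ≤ n)
    (t : ℕ) (F : Fin t → ℝ)
    (hF : ∀ i, 0 ≤ F i ∧ F i ≤ 1)
    (m : ℕ)
    (h : (n : ℝ) * ∏ i, (1 - (1 - β) * F i) ≥ β ^ m) :
    (1 - β) * ∑ i, F i ≤ (m : ℝ) * Real.log (1 / β) + Real.log n := by
  have hpos : ∀ i, (0 : ℝ) < 1 - (1 - β) * F i := by
    intro i
    obtain ⟨h0, h1⟩ := hF i
    nlinarith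
  have hprodpos : (0 : ℝ) < ∏ i, (1 - (1 - β) * F i) :=
    Finset.prod_pos fun i _ => hpos i
  have hnpos : (0 : ℝ) < (n : ℝ) := by exact_mod_cast hn
  have hlog : (m : ℝ) * Real.log β ≤ Real.log n + ∑ i, Real.log (1 - (1 - β) * F i) := by
    have := Real.log_le_log (by positivity) h
    rwa [Real.log_pow, Real.log_mul (ne_of_gt hnpos) (ne_of_gt hprodpos),
      Real.log_prod (fun i _ => ne_of_gt (hpos i))] at this
  have hsum : ∑ i, Real.log (1 - (1 - β) * F i) ≤ -((1 - β) * ∑ i, F i) := by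
    rw [Finset.mul_sum, ← Finset.sum_neg_distrib]
    apply Finset.sum_le_sum
    intro i _
    have := Real.log_le_sub_one_of_pos (hpos i)
    linarith
  have hloginv : Real.log (1 / β) = -Real.log β := by
    rw [one_div, Real.log_inv]
  rw [hloginv]
  nlinarith [hlog, hsum]

theorem crwm_mistake_bound_core
    (β : ℝ) (hβ0 : 0 < β) (hβ1 : β < 1)
    (n : ℕ) (hn : 1 ≤ n)
    (t₁ t₂ t₃ : ℕ)
    (F₁ : Fin t₁ → ℝ) (F₂ : Fin t₂ → ℝ) (F₃ : Fin t₃ → ℝ)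
    (hF₁ : ∀ i, 0 ≤ F₁ i ∧ F₁ i ≤ 1)
    (hF₂ : ∀ i, 0 ≤ F₂ i ∧ F₂ i ≤ 1)
    (hF₃ : ∀ i, 0 ≤ F₃ i ∧ F₃ i ≤ 1)
    (m₁ m₂ m₃ : ℕ)
    (h₁ : (n : ℝ) * ∏ i, (1 - (1 - β) * F₁ i) ≥ β ^ m₁)
    (h₂ : (n : ℝ) * ∏ i, (1 - (1 - β) * F₂ i) ≥ β ^ m₂)
    (h₃ : (n : ℝ) * ∏ i, (1 - (1 - β) * F₃ i) ≥ β ^ m₃) :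
    (∑ i, F₁ i) + (∑ i, F₂ i) + (∑ i, F₃ i) ≤
      (((m₁ : ℝ) + m₂ + m₃) * Real.log (1 / β) + 3 * Real.log n) / (1 - β) := by
  have b₁ := crwm_single_bound β hβ0 hβ1 n hn t₁ F₁ hF₁ m₁ h₁
  have b₂ := crwm_single_bound β hβ0 hβ1 n hn t₂ F₂ hF₂ m₂ h₂
  have b₃ := crwm_single_bound β hβ0 hβ1 n hn t₃ F₃ hF₃ m₃ h₃
  rw [le_div_iff₀ (by linarith : (0:ℝ) < 1 - β)]
  nlinarith
end

section
/- Let β ∈ (0,1) be a real number, n ≥ 1 and L ≥ 1 natural numbers, and for each j ∈ Fin (L+1) let t_j be a natural number and F_j : Fin t_j → ℝ satisfy 0 ≤ F_j i ≤ 1 for all i. Let m : Fin (L+1) → ℕ be such that for each j, n * ∏_{i} (1 - (1-β) * F_j i) ≥ β^(m j). Then ∑_{j} ∑_{i} F_j i ≤ ((∑_{j} m j) * ln(1/β) + (L+1) * ln n) / (1 - β). -/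
theorem crwm_mistake_bound_multiclass
    (β : ℝ) (hβ0 : 0 < β) (hβ1 : β < 1)
    (n L : ℕ) (hn : 1 ≤ n) (hL : 1 ≤ L)
    (t : Fin (L + 1) → ℕ)
    (F : (j : Fin (L + 1)) → Fin (t j) → ℝ)
    (hF : ∀ j i, 0 ≤ F j i ∧ F j i ≤ 1)
    (m : Fin (L + 1) → ℕ)
    (h : ∀ j, (n : ℝ) * ∏ i, (1 - (1 - β) * F j i) ≥ β ^ (m j)) :
    ∑ j, ∑ i, F j i ≤
      ((∑ j, (m j : ℝ)) * Real.log (1 / β) + (L + 1) * Real.log n) / (1 - β) := by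
  have hb : (0:ℝ) < 1 - β := by linarith
  have key : ∀ j, (1 - β) * ∑ i, F j i ≤ (m j : ℝ) * Real.log (1/β) + Real.log n := by
    intro j
    have hpos : ∀ i ∈ Finset.univ, (0:ℝ) < 1 - (1 - β) * F j i := by
      intro i _
      have h1 := (hF j i).2
      nlinarith [(hF j i).1]
    have hlogprod :
        Real.log (∏ i, (1 - (1 - β) * F j i)) ≤ ∑ i, (-( (1 - β) * F j i)) := by
      rw [Real.log_prod (fun i hi => ne_of_gt (hpos i hi))]
      apply Finset.sum_le_sum
      intro i hi
      have := Real.log_le_sub_one_of_pos (hpos i hi)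
      linarith
    have hPpos : (0:ℝ) < ∏ i, (1 - (1 - β) * F j i) := Finset.prod_pos hpos
    have hnpos : (0:ℝ) < n := by exact_mod_cast hn
    have hlow : (m j : ℝ) * Real.log β ≤ Real.log n + Real.log (∏ i, (1 - (1 - β) * F j i)) := by
      have := Real.log_le_log (by positivity) (h j)
      rwa [Real.log_pow, Real.log_mul (ne_of_gt hnpos) (ne_of_gt hPpos)] at this
    have hinv : Real.log (1/β) = - Real.log β := by
      rw [one_div, Real.log_inv]
    rw [hinv]
    have hsum : ∑ i, (-( (1 - β) * F j i)) = -((1 - β) * ∑ i, F j i) := by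
      simp [Finset.mul_sum]
    nlinarith [hlogprod, hlow]
  have hsum : (1 - β) * ∑ j, ∑ i, F j i ≤
      (∑ j, (m j : ℝ)) * Real.log (1/β) + (L + 1) * Real.log n := by
    rw [Finset.mul_sum, Finset.sum_mul]
    have : (L + 1 : ℝ) * Real.log n = ∑ _j : Fin (L+1), Real.log n := by
      simp [Finset.sum_const, mul_comm]
    rw [this, ← Finset.sum_add_distrib]
    exact Finset.sum_le_sum fun j _ => key j
  rw [le_div_iff₀ hb]
  linarith
end

section
/- Let β ∈ (0,1) be a real number, n ≥ 1 a natural number, and let X_{k1}, X_{p1}, X_2, X_3 and K_2, K_3 be nonnegative real numbers with X_{k1} < X_{p1}. For a real K_1 > 0, define Bound_CRWM(K_1) = ((K_1 X_{k1} + K_2 X_2 + K_3 X_3) * ln(1/β) + 3 * ln n) / (1-β) and Bound_RWM(K_1) = ((K_1 X_{p1} + K_2 X_2 + K_3 X_3) * ln(1/β) + ln n) / (1-β). Then for every K_1 > 2 * ln n / ((X_{p1} - X_{k1}) * ln(1/β)), one has Bound_CRWM(K_1) < Bound_RWM(K_1); in particular there exists K_0 ≥ 0 such that Bound_CRWM(K_1)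 < Bound_RWM(K_1) for all K_1 > K_0. -/
theorem crwm_bound_eventually_better
    (β : ℝ) (hβ0 : 0 < β) (hβ1 : β < 1)
    (n : ℕ) (hn : 1 ≤ n)
    (Xk1 Xp1 X₂ X₃ K₂ K₃ : ℝ)
    (hXk1 : 0 ≤ Xk1) (hXp1 : 0 ≤ Xp1) (hX₂ : 0 ≤ X₂) (hX₃ : 0 ≤ X₃)
    (hK₂ : 0 ≤ K₂) (hK₃ : 0 ≤ K₃)
    (hlt : Xk1 < Xp1) :
    (∀ K₁ : ℝ, K₁ > 2 * Real.log n / ((Xp1 - Xk1) * Real.log (1 / β)) →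
        ((K₁ * Xk1 + K₂ * X₂ + K₃ * X₃) * Real.log (1 / β) + 3 * Real.log n) / (1 - β) <
          ((K₁ * Xp1 + K₂ * X₂ + K₃ * X₃) * Real.log (1 / β) + Real.log n) / (1 - β)) ∧
      ∃ K₀ : ℝ, 0 ≤ K₀ ∧ ∀ K₁ : ℝ, K₁ > K₀ →
        ((K₁ * Xk1 + K₂ * X₂ + K₃ * X₃) * Real.log (1 / β) + 3 * Real.log n) / (1 - β) <
          ((K₁ * Xp1 + K₂ * X₂ + K₃ * X₃) * Real.log (1 / β) + Real.log n) / (1 - β) := by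
  have hL : 0 < Real.log (1 / β) := by
    rw [Real.log_div one_ne_zero (ne_of_gt hβ0), Real.log_one]
    have := Real.log_neg hβ0 hβ1
    linarith
  have hlogn : 0 ≤ Real.log n := by
    apply Real.log_nonneg
    exact_mod_cast hn
  have hd : 0 < (Xp1 - Xk1) * Real.log (1 / β) := by
    apply mul_pos; linarith; exact hL
  have hβ : 0 < 1 - β := by linarith
  have main : ∀ K₁ : ℝ, K₁ > 2 * Real.log n / ((Xp1 - Xk1) * Real.log (1 / β)) →
      ((K₁ * Xk1 + K₂ * X₂ + K₃ * X₃) * Real.log (1 / β) + 3 * Real.log n) / (1 - β) <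
        ((K₁ * Xp1 + K₂ * X₂ + K₃ * X₃) * Real.log (1 / β) + Real.log n) / (1 - β) := by
    intro K₁ hK₁
    apply (div_lt_div_iff_of_pos_right hβ).mpr
    have : 2 * Real.log n < K₁ * ((Xp1 - Xk1) * Real.log (1 / β)) :=
      (div_lt_iff₀ hd).mp hK₁
    nlinarith
  refine ⟨main, 2 * Real.log n / ((Xp1 - Xk1) * Real.log (1 / β)),
    div_nonneg (by linarith) hd.le, main⟩
end
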